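/- arXiv:2212.11193 — 3 statements merged into one kernel-verified Lean document; each statement's English description precedes it below -/
import Mathlib

section
/- Let F be a field, B ⊆ [n]×[n], and ω a function assigning a nonzero element of F to each permutation. Define D_ω(A) = Σ_{σ∈S_m} ω(σ) Π_i A(i,σ(i)) for A ∈ M_m(F), and the ω-rank of A ∈ M_n(F) as the largest k for which some k×k submatrix B of A has D_ω(B) ≠ 0. Then the maximal ω-rank of a matrix in M_B(F) equals the bipartite matching number ν_b(B). -/
open Matrix

/-- A bipartite matching: all first coordinates distinct, all second coordinates distinct. -/
def IsBipMatching {n : ℕ} (B₀ : Finset (Fin n × Fin n)) : Prop :=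
  ∀ p ∈ B₀, ∀ q ∈ B₀, p ≠ q → p.1 ≠ q.1 ∧ p.2 ≠ q.2

/-- The bipartite matching number of a set of positions. -/
noncomputable def nuB {n : ℕ} (B : Set (Fin n × Fin n)) : ℕ :=
  sSup {m | ∃ B₀ : Finset (Fin n × Fin n), ↑B₀ ⊆ B ∧ IsBipMatching B₀ ∧ B₀.card = m}

/-- The Schur functional `D_ω`. -/
def Dw {F : Type*} [Field F] (ω : ∀ m : ℕ, Equiv.Perm (Fin m) → F) {m : ℕ}
    (A : Matrix (Fin m) (Fin m) F) : F :=
  ∑ σ : Equiv.Perm (Fin m), ω m σ * ∏ i, A i (σ i)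

/-- The ω-rank: the largest k such that some k×k submatrix B has `D_ω B ≠ 0`. -/
noncomputable def rkw {F : Type*} [Field F] (ω : ∀ m : ℕ, Equiv.Perm (Fin m) → F) {n : ℕ}
    (A : Matrix (Fin n) (Fin n) F) : ℕ :=
  sSup {k | ∃ I J : Fin k → Fin n, StrictMono I ∧ StrictMono J ∧
    Dw ω (A.submatrix I J) ≠ 0}

/-- The permanent. -/
def per {F : Type*} [Field F] {m : ℕ} (A : Matrix (Fin m) (Fin m) F) : F :=
  ∑ σ : Equiv.Perm (Fin m), ∏ i, A i (σ i)

/-- The permanental rank. -/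
noncomputable def prk {F : Type*} [Field F] {n : ℕ} (A : Matrix (Fin n) (Fin n) F) : ℕ :=
  sSup {k | ∃ I J : Fin k → Fin n, StrictMono I ∧ StrictMono J ∧
    per (A.submatrix I J) ≠ 0}

/-- Lexicographic (row-major) order on positions. -/
def LexLt {n : ℕ} (p q : Fin n × Fin n) : Prop :=
  p.1 < q.1 ∨ (p.1 = q.1 ∧ p.2 < q.2)

/-- `BW W` is the set of lexicographically minimal support positions of nonzero matrices in `W`. -/
def BW {F : Type*} [Field F] {n : ℕ} (W : Submodule F (Matrix (Fin n) (Fin n) F)) :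
    Set (Fin n × Fin n) :=
  {p | ∃ A ∈ W, A ≠ 0 ∧ A p.1 p.2 ≠ 0 ∧ ∀ q, LexLt q p → A q.1 q.2 = 0}

/-- Alternating matrix: `A = -Aᵗ` and zero diagonal. -/
def IsAlt {F : Type*} [Field F] {n : ℕ} (A : Matrix (Fin n) (Fin n) F) : Prop :=
  Aᵀ = -A ∧ ∀ i, A i i = 0

/-- A matching in a graph: pairwise disjoint edges. -/
def IsGraphMatching {n : ℕ} (M : Finset (Sym2 (Fin n))) : Prop :=
  ∀ e ∈ M, ∀ f ∈ M, e ≠ f → ∀ x : Fin n, x ∈ e → x ∉ f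

/-- The matching number of a graph. -/
noncomputable def nuG {n : ℕ} (G : Set (Sym2 (Fin n))) : ℕ :=
  sSup {m | ∃ M : Finset (Sym2 (Fin n)), ↑M ⊆ G ∧ IsGraphMatching M ∧ M.card = m}

/-- `GU U`: edges `{i,j}` arising as lexicographically minimal support positions in `U`. -/
def GU {F : Type*} [Field F] {n : ℕ} (U : Submodule F (Matrix (Fin n) (Fin n) F)) :
    Set (Sym2 (Fin n)) :=
  {e | ∃ A ∈ U, ∃ i j : Fin n, A ≠ 0 ∧ A i j ≠ 0 ∧
    (∀ q : Fin n × Fin n, LexLt q (i, j) → A q.1 q.2 = 0) ∧ e = s(i, j)}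


section Aux

variable {F : Type*} [Field F] {n : ℕ}

lemma rkw_le_n (ω : ∀ m : ℕ, Equiv.Perm (Fin m) → F) (A : Matrix (Fin n) (Fin n) F) :
    rkw ω A ≤ n := by
  refine csSup_le' ?_
  rintro k ⟨I, J, hI, hJ, hD⟩
  simpa using Fintype.card_le_of_injective I hI.injective

lemma rkwSet_bdd (ω : ∀ m : ℕ, Equiv.Perm (Fin m) → F) (A : Matrix (Fin n) (Fin n) F) :
    BddAbove {k | ∃ I J : Fin k → Fin n, StrictMono I ∧ StrictMono J ∧
      Dw ω (A.submatrix I J) ≠ 0} := by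
  refine ⟨n, ?_⟩
  rintro k ⟨I, J, hI, hJ, hD⟩
  simpa using Fintype.card_le_of_injective I hI.injective

/-- Lemma A: a witness of ω-rank k yields a matching of size k inside the support. -/
lemma exists_matching_of_Dw {B : Set (Fin n × Fin n)} {A : Matrix (Fin n) (Fin n) F}
    (hA : ∀ i j, (i, j) ∉ B → A i j = 0) (ω : ∀ m : ℕ, Equiv.Perm (Fin m) → F)
    {k : ℕ} {I J : Fin k → Fin n} (hI : StrictMono I) (hJ : StrictMono J)
    (hD : Dw ω (A.submatrix I J) ≠ 0) :
    ∃ B₀ : Finset (Fin n × Fin n), ↑B₀ ⊆ B ∧ IsBipMatching B₀ ∧ B₀.card = k := by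
  unfold Dw at hD
  obtain ⟨σ, -, hσ⟩ := Finset.exists_ne_zero_of_sum_ne_zero hD
  have hprod : ∏ i, A (I i) (J (σ i)) ≠ 0 := by
    intro h
    apply hσ
    simp only [Matrix.submatrix_apply, h, mul_zero]
  have hentry : ∀ i, A (I i) (J (σ i)) ≠ 0 := fun i =>
    Finset.prod_ne_zero_iff.mp hprod i (Finset.mem_univ i)
  refine ⟨Finset.image (fun i => (I i, J (σ i))) Finset.univ, ?_, ?_, ?_⟩
  · intro p hp
    simp only [Finset.coe_image, Set.mem_image, Finset.coe_univ, Set.mem_univ, true_and] at hp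
    obtain ⟨i, rfl⟩ := hp
    by_contra hmem
    exact hentry i (hA _ _ hmem)
  · rintro p hp q hq hpq
    simp only [Finset.mem_image, Finset.mem_univ, true_and] at hp hq
    obtain ⟨i, rfl⟩ := hp
    obtain ⟨j, rfl⟩ := hq
    have hij : i ≠ j := fun h => hpq (by rw [h])
    exact ⟨fun h => hij (hI.injective h), fun h => hij (σ.injective (hJ.injective h))⟩
  · rw [Finset.card_image_of_injective _ (fun i j h => hI.injective (congrArg Prod.fst h)),
      Finset.card_univ, Fintype.card_fin]

/-- Lemma B: from a matching of size m inside B, build a matrix supported on B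
whose ω-rank is at least m. -/
lemma exists_matrix_of_matching {B : Set (Fin n × Fin n)}
    (ω : ∀ m : ℕ, Equiv.Perm (Fin m) → F) (hω : ∀ m σ, ω m σ ≠ 0)
    {m : ℕ} {B₀ : Finset (Fin n × Fin n)} (hB : ↑B₀ ⊆ B) (hM : IsBipMatching B₀)
    (hc : B₀.card = m) :
    ∃ A : Matrix (Fin n) (Fin n) F, (∀ i j, (i, j) ∉ B → A i j = 0) ∧
      m ∈ {k | ∃ I J : Fin k → Fin n, StrictMono I ∧ StrictMono J ∧
        Dw ω (A.submatrix I J) ≠ 0} := by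
  classical
  set A : Matrix (Fin n) (Fin n) F := fun i j => if (i, j) ∈ B₀ then 1 else 0 with hAdef
  have hAsupp : ∀ i j, (i, j) ∉ B → A i j = 0 := by
    intro i j hij
    have hn : (i, j) ∉ B₀ := fun h => hij (hB h)
    simp only [hAdef]
    rw [if_neg hn]
  -- rows and columns of the matching
  have hfst : Set.InjOn Prod.fst (B₀ : Set (Fin n × Fin n)) := by
    intro p hp q hq h
    by_contra hne
    exact (hM p hp q hq hne).1 h
  have hsnd : Set.InjOn Prod.snd (B₀ : Set (Fin n × Fin n)) := by
    intro p hp q hq h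
    by_contra hne
    exact (hM p hp q hq hne).2 h
  set R := B₀.image Prod.fst with hRdef
  set C := B₀.image Prod.snd with hCdef
  have hR : R.card = m := by rw [hRdef, Finset.card_image_of_injOn hfst, hc]
  have hC : C.card = m := by rw [hCdef, Finset.card_image_of_injOn hsnd, hc]
  set eI := R.orderIsoOfFin hR with heI
  set eJ := C.orderIsoOfFin hC with heJ
  set I : Fin m → Fin n := fun i => (eI i : Fin n) with hIdef
  set J : Fin m → Fin n := fun j => (eJ j : Fin n) with hJdef
  have hI : StrictMono I := fun a b hab => by
    exact_mod_cast eI.strictMono hab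
  have hJ : StrictMono J := fun a b hab => by
    exact_mod_cast eJ.strictMono hab
  -- bijections from B₀ to rows/cols
  have hginj : Function.Injective (fun p : {p // p ∈ B₀} => (⟨p.1.1,
      Finset.mem_image_of_mem Prod.fst p.2⟩ : {x // x ∈ R})) := by
    rintro ⟨p, hp⟩ ⟨q, hq⟩ h
    simp only [Subtype.mk.injEq] at h
    exact Subtype.ext (hfst hp hq h)
  have hhinj : Function.Injective (fun p : {p // p ∈ B₀} => (⟨p.1.2,
      Finset.mem_image_of_mem Prod.snd p.2⟩ : {x // x ∈ C})) := by
    rintro ⟨p, hp⟩ ⟨q, hq⟩ h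
    simp only [Subtype.mk.injEq] at h
    exact Subtype.ext (hsnd hp hq h)
  have hgbij : Function.Bijective (fun p : {p // p ∈ B₀} => (⟨p.1.1,
      Finset.mem_image_of_mem Prod.fst p.2⟩ : {x // x ∈ R})) :=
    (Fintype.bijective_iff_injective_and_card _).2 ⟨hginj, by
      simp only [Fintype.card_coe, hR, hc]⟩
  set gE := Equiv.ofBijective _ hgbij with hgE
  set hE : {p // p ∈ B₀} → {x // x ∈ C} := fun p => ⟨p.1.2,
    Finset.mem_image_of_mem Prod.snd p.2⟩ with hhE
  set τ : Fin m → Fin m := fun i => eJ.symm (hE (gE.symm (eI i))) with hτdef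
  have hτbij : Function.Bijective τ := by
    have : τ = (eJ.symm.toEquiv.toFun) ∘ (Equiv.ofBijective hE
      ((Fintype.bijective_iff_injective_and_card _).2 ⟨hhinj, by
        simp only [Fintype.card_coe, hC, hc]⟩)) ∘ gE.symm ∘ eI.toEquiv := rfl
    rw [this]
    exact (eJ.symm.toEquiv.bijective.comp ((Equiv.ofBijective hE _).bijective.comp
      (gE.symm.bijective.comp eI.toEquiv.bijective)))
  -- the key membership facts
  have hmem : ∀ i : Fin m, (I i, J (τ i)) ∈ B₀ := by
    intro i
    set p := gE.symm (eI i) with hp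
    have h1 : (p : Fin n × Fin n).1 = I i := by
      have := gE.apply_symm_apply (eI i)
      rw [← hp] at this
      have := congrArg Subtype.val this
      simpa [hgE, Equiv.ofBijective] using this
    have h2 : J (τ i) = (p : Fin n × Fin n).2 := by
      simp only [hJdef, hτdef, ← hp]
      rw [OrderIso.apply_symm_apply]
    have : (I i, J (τ i)) = (p : Fin n × Fin n) := by
      rw [h2, ← h1]
    rw [this]
    exact p.2
  have huniq : ∀ i j : Fin m, (I i, J j) ∈ B₀ → j = τ i := by
    intro i j hij
    have h1 := hmem i
    have : ((I i, J j) : Fin n × Fin n) = (I i, J (τ i)) := by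
      by_contra hne
      exact (hM _ hij _ h1 hne).1 rfl
    have := congrArg Prod.snd this
    exact hJ.injective this
  -- compute the submatrix
  have hsub : ∀ i j : Fin m, A.submatrix I J i j = if j = τ i then 1 else 0 := by
    intro i j
    simp only [Matrix.submatrix_apply]; simp only [hAdef]
    by_cases h : j = τ i
    · rw [if_pos h, if_pos (h ▸ hmem i)]
    · rw [if_neg h, if_neg (fun hm => h (huniq i j hm))]
  set τE : Equiv.Perm (Fin m) := Equiv.ofBijective τ hτbij with hτE
  have hDw : Dw ω (A.submatrix I J) = ω m τE := by
    unfold Dw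
    rw [Finset.sum_eq_single τE]
    · have : ∀ i, A.submatrix I J i (τE i) = 1 := by
        intro i
        rw [hsub]
        simp [hτE, Equiv.ofBijective]
      rw [Finset.prod_congr rfl (fun i _ => this i), Finset.prod_const_one, mul_one]
    · intro σ _ hσ
      have : ∃ i, σ i ≠ τE i := by
        by_contra hcon
        push_neg at hcon
        exact hσ (Equiv.ext hcon)
      obtain ⟨i, hi⟩ := this
      have : A.submatrix I J i (σ i) = 0 := by
        rw [hsub]
        rw [if_neg (by simpa [hτE, Equiv.ofBijective] using hi)]
      rw [Finset.prod_eq_zero (Finset.mem_univ i) this, mul_zero]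
    · intro h
      exact absurd (Finset.mem_univ τE) h
  exact ⟨A, hAsupp, I, J, hI, hJ, by rw [hDw]; exact hω m τE⟩

end Aux


theorem stmt1 {F : Type*} [Field F] {n : ℕ} (B : Set (Fin n × Fin n))
    (ω : ∀ m : ℕ, Equiv.Perm (Fin m) → F) (hω : ∀ m σ, ω m σ ≠ 0) :
    sSup {r | ∃ A : Matrix (Fin n) (Fin n) F,
        (∀ i j, (i, j) ∉ B → A i j = 0) ∧ rkw ω A = r} = nuB B := by
  classical
  apply le_antisymm
  · refine csSup_le' ?_
    rintro r ⟨A, hA, rfl⟩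
    refine csSup_le' ?_
    rintro k ⟨I, J, hI, hJ, hD⟩
    obtain ⟨B₀, hB₀, hM, hc⟩ := exists_matching_of_Dw hA ω hI hJ hD
    exact le_csSup ⟨n, by
      rintro m ⟨B₁, hB₁, hM₁, rfl⟩
      calc B₁.card = (B₁.image Prod.fst).card := by
            rw [Finset.card_image_of_injOn (fun p hp q hq h => by
              by_contra hne; exact (hM₁ p hp q hq hne).1 h)]
        _ ≤ n := by simpa using Finset.card_le_univ (B₁.image Prod.fst)⟩
      ⟨B₀, hB₀, hM, hc⟩
  · refine csSup_le' ?_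
    rintro m ⟨B₀, hB₀, hM, hc⟩
    obtain ⟨A, hAsupp, hm⟩ := exists_matrix_of_matching ω hω hB₀ hM hc
    have h1 : m ≤ rkw ω A := le_csSup (rkwSet_bdd ω A) hm
    have h2 : rkw ω A ≤ sSup {r | ∃ A : Matrix (Fin n) (Fin n) F,
        (∀ i j, (i, j) ∉ B → A i j = 0) ∧ rkw ω A = r} :=
      le_csSup ⟨n, by rintro r ⟨A', hA', rfl⟩; exact rkw_le_n ω A'⟩ ⟨A, hAsupp, rfl⟩
    exact h1.trans h2
end

section
/- Let F be a field, ω a weight function assigning nonzero scalars to permutations, B ⊆ [n]×[n], and k ≥ 0. Then the maximum dimension of a linear subspace W ≤ M_B(F) with rk_ω(A) ≤ k for all A ∈ W equals the maximum of |B'| over subsets B' ⊆ B with bipartite matching number ν_b(B') ≤ k. -/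
open Matrix

lemma bij_le_eq {m : ℕ} {σ κ : Fin m → Fin m} (hσ : Function.Bijective σ)
    (hκ : Function.Bijective κ) (h : ∀ i, κ i ≤ σ i) : ∀ i, κ i = σ i := by
  have hsum : ∑ i, ((κ i : ℕ)) = ∑ i, ((σ i : ℕ)) := by
    rw [Function.Bijective.sum_comp hκ (fun j => (j : ℕ)),
      Function.Bijective.sum_comp hσ (fun j => (j : ℕ))]
  have := (Finset.sum_eq_sum_iff_of_le (s := Finset.univ)
    (f := fun i => ((κ i : ℕ))) (g := fun i => ((σ i : ℕ))) (fun i _ => h i)).1 hsum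
  intro i
  exact Fin.ext (this i (Finset.mem_univ i))

lemma sum_compl_pow {m : ℕ} {F : Type*} [Field F] (R₀ : Finset (Fin m)) :
    (∑ S : Finset (Fin m), if R₀ ⊆ S then ((-1 : F) ^ (Sᶜ.card)) else 0)
      = if R₀ = Finset.univ then 1 else 0 := by
  classical
  have hbij : Function.Bijective (fun S : Finset (Fin m) => Sᶜ) :=
    Function.Involutive.bijective (fun S => compl_compl S)
  rw [← Function.Bijective.sum_comp hbij
    (fun S => if R₀ ⊆ S then ((-1 : F) ^ (Sᶜ.card)) else 0)]
  simp only [compl_compl]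
  have h1 : ∀ S : Finset (Fin m), (R₀ ⊆ Sᶜ) = (S ⊆ R₀ᶜ) := by
    intro S; rw [eq_iff_iff, Finset.subset_compl_comm]
  simp only [h1]
  rw [← Finset.sum_filter]
  have h2 : Finset.univ.filter (fun S : Finset (Fin m) => S ⊆ R₀ᶜ) = R₀ᶜ.powerset := by
    ext S; simp [Finset.mem_powerset]
  rw [h2]
  have h3 : (∑ x ∈ R₀ᶜ.powerset, ((-1:F) ^ x.card))
      = (((∑ x ∈ R₀ᶜ.powerset, ((-1:ℤ) ^ x.card)) : ℤ) : F) := by push_cast; rfl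
  rw [h3, Finset.sum_powerset_neg_one_pow_card]
  by_cases h : R₀ = Finset.univ
  · simp [h]
  · have : R₀ᶜ ≠ ∅ := by
      intro hc
      exact h (by simpa [Finset.compl_eq_empty_iff] using hc)
    simp [this, h]

lemma key {F : Type*} [Field F] {n : ℕ} (ω : ∀ m : ℕ, Equiv.Perm (Fin m) → F)
    (hω : ∀ m σ, ω m σ ≠ 0) (W : Submodule F (Matrix (Fin n) (Fin n) F))
    (B₀ : Finset (Fin n × Fin n)) (hB₀ : ↑B₀ ⊆ BW W) (hmatch : IsBipMatching B₀)
    {m : ℕ} (hcard : B₀.card = m) :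
    ∃ A ∈ W, ∃ I J : Fin m → Fin n, StrictMono I ∧ StrictMono J ∧
      Dw ω (A.submatrix I J) ≠ 0 := by
  classical
  have hfst : Set.InjOn Prod.fst (↑B₀ : Set (Fin n × Fin n)) := by
    intro p hp q hq hpq
    by_contra hne
    exact (hmatch p hp q hq hne).1 hpq
  have hsnd : Set.InjOn Prod.snd (↑B₀ : Set (Fin n × Fin n)) := by
    intro p hp q hq hpq
    by_contra hne
    exact (hmatch p hp q hq hne).2 hpq
  set R := B₀.image Prod.fst with hRdef
  set C := B₀.image Prod.snd with hCdef
  have hRcard : R.card = m := by rw [hRdef, Finset.card_image_of_injOn hfst, hcard]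
  have hCcard : C.card = m := by rw [hCdef, Finset.card_image_of_injOn hsnd, hcard]
  set I : Fin m → Fin n := fun i => R.orderEmbOfFin hRcard i with hIdef
  set J : Fin m → Fin n := fun j => C.orderEmbOfFin hCcard j with hJdef
  have hI : StrictMono I := (R.orderEmbOfFin hRcard).strictMono
  have hJ : StrictMono J := (C.orderEmbOfFin hCcard).strictMono
  -- the position φ i with row I i
  have hφex : ∀ i : Fin m, ∃ p, p ∈ B₀ ∧ p.1 = I i := by
    intro i
    have : I i ∈ R := R.orderEmbOfFin_mem hRcard i
    rw [hRdef] at this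
    obtain ⟨p, hp, hp1⟩ := Finset.mem_image.1 this
    exact ⟨p, hp, hp1⟩
  choose φ hφmem hφ1 using hφex
  have hκex : ∀ i : Fin m, ∃ j : Fin m, J j = (φ i).2 := by
    intro i
    have h2 : (φ i).2 ∈ C := by
      rw [hCdef]; exact Finset.mem_image_of_mem Prod.snd (hφmem i)
    have : (φ i).2 ∈ Set.range (C.orderEmbOfFin hCcard) := by
      rw [Finset.range_orderEmbOfFin]; exact_mod_cast h2
    obtain ⟨j, hj⟩ := this
    exact ⟨j, hj⟩
  choose κ hκ using hκex
  have hφinj : Function.Injective φ := by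
    intro i j hij
    exact hI.injective (by rw [← hφ1 i, ← hφ1 j, hij])
  have hκinj : Function.Injective κ := by
    intro i j hij
    have h2 : (φ i).2 = (φ j).2 := by rw [← hκ i, ← hκ j, hij]
    exact hφinj (hsnd (hφmem i) (hφmem j) h2)
  have hκbij : Function.Bijective κ := Finite.injective_iff_bijective.1 hκinj
  have hwit : ∀ i : Fin m, ∃ A, A ∈ W ∧ A (I i) (J (κ i)) ≠ 0 ∧
      ∀ q : Fin n × Fin n, LexLt q (I i, J (κ i)) → A q.1 q.2 = 0 := by
    intro i
    have hmem : φ i ∈ BW W := hB₀ (hφmem i)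
    obtain ⟨A, hAW, _, hAp, hAq⟩ := hmem
    have e : φ i = (I i, J (κ i)) := Prod.ext (hφ1 i) (hκ i).symm
    rw [e] at hAp hAq
    exact ⟨A, hAW, hAp, hAq⟩
  choose T hTW hTd hTlex using hwit
  have va : ∀ t i : Fin m, i < t → ∀ j : Fin m, T t (I i) (J j) = 0 := by
    intro t i hit j
    exact hTlex t (I i, J j) (Or.inl (hI hit))
  have vb : ∀ t j : Fin m, j < κ t → T t (I t) (J j) = 0 := by
    intro t j hj
    exact hTlex t (I t, J j) (Or.inr ⟨rfl, hJ hj⟩)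
  set κE : Equiv.Perm (Fin m) := Equiv.ofBijective κ hκbij with hκE
  set P : (Fin m → Fin m) → Equiv.Perm (Fin m) → F :=
    fun g σ => ∏ i, T (g i) (I i) (J (σ i)) with hPdef
  -- entries of a sum
  have entry : ∀ (S : Finset (Fin m)) (x y : Fin n),
      (∑ t ∈ S, T t) x y = ∑ t ∈ S, T t x y := by
    intro S x y
    simp [Matrix.sum_apply]
  -- per-subset expansion
  have hpi : ∀ (S : Finset (Fin m)) (σ : Equiv.Perm (Fin m)),
      (∏ i, (∑ t ∈ S, T t) (I i) (J (σ i)))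
        = ∑ g : Fin m → Fin m, if Finset.univ.image g ⊆ S then P g σ else 0 := by
    intro S σ
    have e1 : (∏ i, (∑ t ∈ S, T t) (I i) (J (σ i)))
        = ∑ g ∈ Fintype.piFinset (fun _ : Fin m => S), ∏ i, T (g i) (I i) (J (σ i)) := by
      simp only [entry]
      exact Finset.prod_univ_sum _ _
    rw [e1, ← Finset.sum_filter]
    congr 1
    ext g
    simp [Fintype.mem_piFinset, Finset.image_subset_iff]
  -- the main identity
  have main : ∑ S : Finset (Fin m), (-1:F)^(Sᶜ.card) * Dw ω ((∑ t ∈ S, T t).submatrix I J)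
      = ω m κE * ∏ i, T i (I i) (J (κ i)) := by
    have step1 : ∀ S : Finset (Fin m),
        (-1:F)^(Sᶜ.card) * Dw ω ((∑ t ∈ S, T t).submatrix I J)
          = ∑ σ : Equiv.Perm (Fin m), ∑ g : Fin m → Fin m,
              (if Finset.univ.image g ⊆ S then ((-1:F)^(Sᶜ.card)) else 0) * (ω m σ * P g σ) := by
      intro S
      rw [Dw, Finset.mul_sum]
      apply Finset.sum_congr rfl
      intro σ _
      simp only [Matrix.submatrix_apply]
      rw [hpi S σ, Finset.mul_sum, Finset.mul_sum]
      apply Finset.sum_congr rfl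
      intro g _
      by_cases hc : Finset.univ.image g ⊆ S
      · simp [hc, mul_assoc]
      · simp [hc]
    calc ∑ S : Finset (Fin m), (-1:F)^(Sᶜ.card) * Dw ω ((∑ t ∈ S, T t).submatrix I J)
        = ∑ S : Finset (Fin m), ∑ σ : Equiv.Perm (Fin m), ∑ g : Fin m → Fin m,
            (if Finset.univ.image g ⊆ S then ((-1:F)^(Sᶜ.card)) else 0) * (ω m σ * P g σ) :=
          Finset.sum_congr rfl fun S _ => step1 S
      _ = ∑ σ : Equiv.Perm (Fin m), ∑ S : Finset (Fin m), ∑ g : Fin m → Fin m,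
            (if Finset.univ.image g ⊆ S then ((-1:F)^(Sᶜ.card)) else 0) * (ω m σ * P g σ) :=
          Finset.sum_comm
      _ = ∑ σ : Equiv.Perm (Fin m), ∑ g : Fin m → Fin m, ∑ S : Finset (Fin m),
            (if Finset.univ.image g ⊆ S then ((-1:F)^(Sᶜ.card)) else 0) * (ω m σ * P g σ) :=
          Finset.sum_congr rfl fun σ _ => Finset.sum_comm
      _ = ∑ σ : Equiv.Perm (Fin m), ∑ g : Fin m → Fin m,
            (if Finset.univ.image g = Finset.univ then (1:F) else 0) * (ω m σ * P g σ) := by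
          apply Finset.sum_congr rfl; intro σ _
          apply Finset.sum_congr rfl; intro g _
          rw [← Finset.sum_mul, sum_compl_pow]
      _ = ∑ σ : Equiv.Perm (Fin m), ω m σ * P id σ := by
          apply Finset.sum_congr rfl; intro σ _
          rw [Finset.sum_eq_single id]
          · simp
          · intro g _ hg
            by_cases hsurj : Finset.univ.image g = Finset.univ
            · have hgsurj : Function.Surjective g := by
                intro j
                have hj : j ∈ Finset.univ.image g := by rw [hsurj]; exact Finset.mem_univ j
                obtain ⟨i, _, hi⟩ := Finset.mem_image.1 hj
                exact ⟨i, hi⟩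
              have hgbij : Function.Bijective g := Finite.surjective_iff_bijective.1 hgsurj
              have hnle : ¬ ∀ i, g i ≤ i := by
                intro hle
                exact hg (funext (bij_le_eq Function.bijective_id hgbij hle))
              push_neg at hnle
              obtain ⟨i, hi⟩ := hnle
              have hz : P g σ = 0 :=
                Finset.prod_eq_zero (Finset.mem_univ i) (va (g i) i hi (σ i))
              simp [hz]
            · simp [hsurj]
          · intro h; exact absurd (Finset.mem_univ id) h
      _ = ω m κE * ∏ i, T i (I i) (J (κ i)) := by
          rw [Finset.sum_eq_single κE]
          · simp [hPdef, hκE]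
          · intro σ _ hσ
            have hnle : ¬ ∀ i, κ i ≤ σ i := by
              intro hle
              have heq := bij_le_eq σ.bijective hκbij hle
              exact hσ (Equiv.ext fun i => heq i).symm
            push_neg at hnle
            obtain ⟨i, hi⟩ := hnle
            have hz : P id σ = 0 :=
              Finset.prod_eq_zero (Finset.mem_univ i) (vb i (σ i) hi)
            simp [hz]
          · intro h; exact absurd (Finset.mem_univ κE) h
  -- conclude
  have hne : ω m κE * ∏ i, T i (I i) (J (κ i)) ≠ 0 :=
    mul_ne_zero (hω m κE) (Finset.prod_ne_zero_iff.2 fun i _ => hTd i)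
  have hex : ∃ S : Finset (Fin m), Dw ω ((∑ t ∈ S, T t).submatrix I J) ≠ 0 := by
    by_contra hall
    push_neg at hall
    apply hne
    rw [← main]
    apply Finset.sum_eq_zero
    intro S _
    rw [hall S, mul_zero]
  obtain ⟨S, hS⟩ := hex
  exact ⟨∑ t ∈ S, T t, Submodule.sum_mem W (fun t _ => hTW t), I, J, hI, hJ, hS⟩

lemma exists_lexmin {n : ℕ} {F : Type*} [Field F] (A : Matrix (Fin n) (Fin n) F) (hA : A ≠ 0) :
    ∃ p : Fin n × Fin n, A p.1 p.2 ≠ 0 ∧ ∀ q, LexLt q p → A q.1 q.2 = 0 := by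
  classical
  have hs : (Finset.univ.filter (fun p : Fin n × Fin n => A p.1 p.2 ≠ 0)).Nonempty := by
    by_contra h
    rw [Finset.not_nonempty_iff_eq_empty, Finset.filter_eq_empty_iff] at h
    apply hA
    ext i j
    have := h (Finset.mem_univ (i, j))
    simpa using this
  obtain ⟨p, hp, hmin⟩ := Finset.exists_min_image _
    (fun p : Fin n × Fin n => (p.1 : ℕ) * n + (p.2 : ℕ)) hs
  refine ⟨p, (Finset.mem_filter.1 hp).2, ?_⟩
  intro q hq
  by_contra hq0
  have hqmem : q ∈ Finset.univ.filter (fun p : Fin n × Fin n => A p.1 p.2 ≠ 0) :=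
    Finset.mem_filter.2 ⟨Finset.mem_univ q, hq0⟩
  have hle := hmin q hqmem
  have hlt : (q.1 : ℕ) * n + (q.2 : ℕ) < (p.1 : ℕ) * n + (p.2 : ℕ) := by
    have h2q : (q.2 : ℕ) < n := q.2.isLt
    have h2p : (p.2 : ℕ) < n := p.2.isLt
    rcases hq with h | ⟨h1, h2⟩
    · have : (q.1 : ℕ) < (p.1 : ℕ) := h
      nlinarith
    · have e1 : (q.1 : ℕ) = (p.1 : ℕ) := congrArg Fin.val h1
      have : (q.2 : ℕ) < (p.2 : ℕ) := h2
      rw [e1]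
      omega
  omega

/-- The space of matrices supported on `B'`. -/
def MB {F : Type*} [Field F] {n : ℕ} (B' : Set (Fin n × Fin n)) :
    Submodule F (Matrix (Fin n) (Fin n) F) where
  carrier := {A | ∀ i j, (i, j) ∉ B' → A i j = 0}
  add_mem' := by
    intro A B ha hb i j h
    simp only [Matrix.add_apply, ha i j h, hb i j h, add_zero]
  zero_mem' := by intro i j h; rfl
  smul_mem' := by
    intro c A ha i j h
    simp only [Matrix.smul_apply, ha i j h, smul_zero]

lemma mem_MB {F : Type*} [Field F] {n : ℕ} {B' : Set (Fin n × Fin n)}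
    {A : Matrix (Fin n) (Fin n) F} : A ∈ MB B' ↔ ∀ i j, (i, j) ∉ B' → A i j = 0 :=
  Iff.rfl

lemma ncard_le_finrank_MB {F : Type*} [Field F] {n : ℕ} (B' : Set (Fin n × Fin n)) :
    B'.ncard ≤ Module.finrank F (MB (F := F) B') := by
  classical
  haveI : Fintype B' := Fintype.ofFinite _
  set Ψ₀ : (B' → F) →ₗ[F] Matrix (Fin n) (Fin n) F :=
    { toFun := fun g => fun i j => if h : (i, j) ∈ B' then g ⟨(i, j), h⟩ else 0
      map_add' := by
        intro g h
        ext i j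
        show (if h' : (i, j) ∈ B' then (g + h) ⟨(i, j), h'⟩ else 0) = (if h' : (i, j) ∈ B' then g ⟨(i, j), h'⟩ else 0) + (if h' : (i, j) ∈ B' then h ⟨(i, j), h'⟩ else 0)
        by_cases hm : (i, j) ∈ B' <;> simp [hm]
      map_smul' := by
        intro c g
        ext i j
        show (if h' : (i, j) ∈ B' then (c • g) ⟨(i, j), h'⟩ else 0) = c * (if h' : (i, j) ∈ B' then g ⟨(i, j), h'⟩ else 0)
        by_cases hm : (i, j) ∈ B' <;> simp [hm] } with hΨ₀
  have hmem : ∀ g, Ψ₀ g ∈ MB (F := F) B' := by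
    intro g i j h
    show (if h' : (i, j) ∈ B' then g ⟨(i, j), h'⟩ else 0) = 0
    simp [hΨ₀, h]
  set Ψ : (B' → F) →ₗ[F] (MB (F := F) B') := Ψ₀.codRestrict (MB (F := F) B') hmem with hΨ
  have hinj : Function.Injective Ψ := by
    intro g h hgh
    ext ⟨⟨i, j⟩, hij⟩
    have := congrArg (fun X : MB (F := F) B' => (X : Matrix (Fin n) (Fin n) F) i j) hgh
    change (if h' : (i, j) ∈ B' then g ⟨(i, j), h'⟩ else 0) = (if h' : (i, j) ∈ B' then h ⟨(i, j), h'⟩ else 0) at this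
    simpa [hΨ, hΨ₀, hij] using this
  have := LinearMap.finrank_le_finrank_of_injective hinj
  rw [Module.finrank_pi] at this
  have hcard : B'.ncard = Fintype.card B' := by
    rw [Set.ncard_eq_toFinset_card', Set.toFinset_card]
  omega

lemma finrank_le_ncard_BW {F : Type*} [Field F] {n : ℕ}
    (W : Submodule F (Matrix (Fin n) (Fin n) F)) :
    Module.finrank F W ≤ (BW W).ncard := by
  classical
  haveI : Fintype (BW W) := Fintype.ofFinite _
  set Φ : W →ₗ[F] ((BW W) → F) :=
    { toFun := fun A p => (A : Matrix (Fin n) (Fin n) F) (p : Fin n × Fin n).1 (p : Fin n × Fin n).2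
      map_add' := by intro A B; ext p; simp
      map_smul' := by intro c A; ext p; simp } with hΦ
  have hinj : Function.Injective Φ := by
    intro A B hAB
    rw [← sub_eq_zero]
    by_contra hne
    have hABW : ((A - B : W) : Matrix (Fin n) (Fin n) F) ≠ 0 := by
      intro h
      apply hne
      ext1
      simpa using h
    obtain ⟨p, hp1, hp2⟩ := exists_lexmin _ hABW
    have hpBW : p ∈ BW W := ⟨((A - B : W) : Matrix (Fin n) (Fin n) F), (A - B : W).2, hABW, hp1, hp2⟩
    have := congrArg (fun g => g ⟨p, hpBW⟩) hAB
    simp only [hΦ] at this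
    apply hp1
    have : (A : Matrix (Fin n) (Fin n) F) p.1 p.2 = (B : Matrix (Fin n) (Fin n) F) p.1 p.2 := this
    simp [Matrix.sub_apply, this]
  have h1 := LinearMap.finrank_le_finrank_of_injective hinj
  rw [Module.finrank_pi] at h1
  have hcard : (BW W).ncard = Fintype.card (BW W) := by
    rw [Set.ncard_eq_toFinset_card', Set.toFinset_card]
  omega


lemma nuB_bdd {n : ℕ} (V : Set (Fin n × Fin n)) :
    BddAbove {m | ∃ B₀ : Finset (Fin n × Fin n), ↑B₀ ⊆ V ∧ IsBipMatching B₀ ∧ B₀.card = m} := by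
  refine ⟨Fintype.card (Fin n × Fin n), ?_⟩
  rintro m ⟨B₀, -, -, rfl⟩
  exact le_trans (Finset.card_le_univ B₀) (le_of_eq Finset.card_univ)

lemma rkw_bdd {F : Type*} [Field F] {n : ℕ} (ω : ∀ m : ℕ, Equiv.Perm (Fin m) → F)
    (A : Matrix (Fin n) (Fin n) F) :
    BddAbove {k | ∃ I J : Fin k → Fin n, StrictMono I ∧ StrictMono J ∧
      Dw ω (A.submatrix I J) ≠ 0} := by
  refine ⟨n, ?_⟩
  rintro m ⟨I, J, hI, hJ, hD⟩
  have := Fintype.card_le_of_injective I hI.injective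
  simpa using this

lemma rkw_le_of_nuB {F : Type*} [Field F] {n : ℕ} (ω : ∀ m : ℕ, Equiv.Perm (Fin m) → F) {k : ℕ}
    (B' : Set (Fin n × Fin n)) (hν : nuB B' ≤ k) (A : Matrix (Fin n) (Fin n) F)
    (hA : ∀ i j, (i, j) ∉ B' → A i j = 0) : rkw ω A ≤ k := by
  classical
  apply csSup_le'
  rintro m ⟨I, J, hI, hJ, hD⟩
  have hσ : ∃ σ : Equiv.Perm (Fin m), (∏ i, A (I i) (J (σ i))) ≠ 0 := by
    by_contra h
    push_neg at h
    apply hD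
    simp only [Dw, Matrix.submatrix_apply]
    apply Finset.sum_eq_zero
    intro σ _
    rw [h σ, mul_zero]
  obtain ⟨σ, hσ⟩ := hσ
  have hmem : ∀ i, (I i, J (σ i)) ∈ B' := by
    intro i
    by_contra h
    exact hσ (Finset.prod_eq_zero (Finset.mem_univ i) (hA _ _ h))
  set B₀ : Finset (Fin n × Fin n) := Finset.univ.image (fun i => (I i, J (σ i))) with hB₀
  have hinj : Function.Injective (fun i : Fin m => (I i, J (σ i))) := by
    intro a b hab
    exact hI.injective (congrArg Prod.fst hab)
  have hcard : B₀.card = m := by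
    rw [hB₀, Finset.card_image_of_injective _ hinj, Finset.card_univ, Fintype.card_fin]
  have hsub : ↑B₀ ⊆ B' := by
    intro p hp
    obtain ⟨a, -, rfl⟩ := Finset.mem_image.1 (by exact_mod_cast hp)
    exact hmem a
  have hmatch : IsBipMatching B₀ := by
    rintro p hp q hq hpq
    obtain ⟨a, -, rfl⟩ := Finset.mem_image.1 hp
    obtain ⟨b, -, rfl⟩ := Finset.mem_image.1 hq
    have hab : a ≠ b := fun h => hpq (by rw [h])
    exact ⟨fun h => hab (hI.injective h), fun h => hab (σ.injective (hJ.injective h))⟩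
  have hle : m ≤ nuB B' := le_csSup (nuB_bdd B') ⟨B₀, hsub, hmatch, hcard⟩
  exact hle.trans hν


theorem stmt5 {F : Type*} [Field F] {n : ℕ} (B : Set (Fin n × Fin n)) (k : ℕ)
    (ω : ∀ m : ℕ, Equiv.Perm (Fin m) → F) (hω : ∀ m σ, ω m σ ≠ 0) :
    sSup {d | ∃ W : Submodule F (Matrix (Fin n) (Fin n) F),
        (∀ A ∈ W, ∀ i j, (i, j) ∉ B → A i j = 0) ∧
        (∀ A ∈ W, rkw ω A ≤ k) ∧ Module.finrank F W = d}
      = sSup {m | ∃ B' : Set (Fin n × Fin n), B' ⊆ B ∧ nuB B' ≤ k ∧ B'.ncard = m} := by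
  classical
  have bddR : BddAbove {m | ∃ B' : Set (Fin n × Fin n), B' ⊆ B ∧ nuB B' ≤ k ∧ B'.ncard = m} := by
    refine ⟨Nat.card (Fin n × Fin n), ?_⟩
    rintro m ⟨B', -, -, rfl⟩
    exact le_trans (Set.ncard_le_ncard (Set.subset_univ B') Set.finite_univ)
      (le_of_eq (Set.ncard_univ _))
  have bddL : BddAbove {d | ∃ W : Submodule F (Matrix (Fin n) (Fin n) F),
      (∀ A ∈ W, ∀ i j, (i, j) ∉ B → A i j = 0) ∧
      (∀ A ∈ W, rkw ω A ≤ k) ∧ Module.finrank F W = d} := by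
    refine ⟨Module.finrank F (Matrix (Fin n) (Fin n) F), ?_⟩
    rintro d ⟨W, -, -, rfl⟩
    exact Submodule.finrank_le W
  apply le_antisymm
  · apply csSup_le'
    rintro d ⟨W, hsupp, hrk, rfl⟩
    have h1 : BW W ⊆ B := by
      rintro ⟨i, j⟩ ⟨A, hAW, hA0, hAij, hmin⟩
      by_contra hB
      exact hAij (hsupp A hAW i j hB)
    have h2 : nuB (BW W) ≤ k := by
      apply csSup_le'
      rintro m ⟨B₀, hsub, hmatch, hcard⟩
      obtain ⟨A, hAW, I, J, hI, hJ, hD⟩ := key ω hω W B₀ hsub hmatch hcard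
      have hm : m ≤ rkw ω A := le_csSup (rkw_bdd ω A) ⟨I, J, hI, hJ, hD⟩
      exact hm.trans (hrk A hAW)
    exact le_trans (finrank_le_ncard_BW W) (le_csSup bddR ⟨BW W, h1, h2, rfl⟩)
  · apply csSup_le'
    rintro m ⟨B', hB'B, hν, rfl⟩
    have hsupp : ∀ A ∈ MB (F := F) B', ∀ i j, (i, j) ∉ B → A i j = 0 := by
      intro A hA i j h
      exact hA i j (fun hmem => h (hB'B hmem))
    have hrk : ∀ A ∈ MB (F := F) B', rkw ω A ≤ k := by
      intro A hA
      exact rkw_le_of_nuB ω B' hν A hA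
    exact le_trans (ncard_le_finrank_MB B')
      (le_csSup bddL ⟨MB (F := F) B', hsupp, hrk, rfl⟩)
end

section
/- Let F be a field, k ≥ 1, and let A_1,...,A_k ∈ M_n(F) be matrices with q(A_t) = (i_t, j_t), where the pairs (i_1,j_1),...,(i_k,j_k) form a bipartite matching (all i_t distinct, all j_t distinct) and each A_t(i_t,j_t) = 1. Then there exists λ ∈ {0,1}^k and index sets I, J of size k such that the k×k submatrix (Σ_t λ_t A_t)[I|J] has nonzero permanent. -/
open Matrix

open Finset in
private lemma aux_bij_le_eq {k : ℕ} {π ρ : Fin k → Fin k} (hπ : Function.Bijective π)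
    (hρ : Function.Bijective ρ) (h : ∀ s, π s ≤ ρ s) (s : Fin k) : π s = ρ s := by
  have h1 : ∑ t, ((π t : ℕ)) = ∑ t : Fin k, (t : ℕ) :=
    Fintype.sum_bijective π hπ _ _ (fun _ => rfl)
  have h2 : ∑ t, ((ρ t : ℕ)) = ∑ t : Fin k, (t : ℕ) :=
    Fintype.sum_bijective ρ hρ _ _ (fun _ => rfl)
  have hle : ∀ t ∈ Finset.univ, (π t : ℕ) ≤ (ρ t : ℕ) := fun t _ => h t
  exact Fin.ext ((Finset.sum_eq_sum_iff_of_le hle).mp (h1.trans h2.symm) s (Finset.mem_univ s))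

open scoped Classical in
private noncomputable def epsF {F : Type*} [Field F] (v : F) : F := if v = 0 then -1 else 1

private lemma epsF_zero {F : Type*} [Field F] : epsF (0 : F) = -1 := by simp [epsF]

private lemma epsF_one {F : Type*} [Field F] : epsF (1 : F) = 1 := by
  simp [epsF, one_ne_zero]

private lemma sum_eps_pow {F : Type*} [Field F] [DecidableEq F] (m : ℕ) :
    ∑ v ∈ ({0, 1} : Finset F), epsF v * v ^ m = if m = 0 then 0 else 1 := by
  rw [Finset.sum_pair (zero_ne_one (α := F))]
  rcases Nat.eq_zero_or_pos m with h | h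
  · subst h; simp [epsF_zero, epsF_one]
  · rw [if_neg h.ne', zero_pow h.ne', one_pow, epsF_zero, epsF_one]; ring


theorem stmt18 {F : Type*} [Field F] {n k : ℕ} (hk : 1 ≤ k)
    (A : Fin k → Matrix (Fin n) (Fin n) F) (i j : Fin k → Fin n)
    (hi : Function.Injective i) (hj : Function.Injective j)
    (hone : ∀ t, A t (i t) (j t) = 1)
    (hq : ∀ t, ∀ p : Fin n × Fin n, LexLt p (i t, j t) → A t p.1 p.2 = 0) :
    ∃ lam : Fin k → F, (∀ t, lam t = 0 ∨ lam t = 1) ∧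
      ∃ I J : Fin k → Fin n, StrictMono I ∧ StrictMono J ∧
        per ((∑ t, lam t • A t).submatrix I J) ≠ 0 := by
  classical
  -- sorted enumerations of the rows and the columns
  have hicard : (Finset.univ.image i).card = k := by
    rw [Finset.card_image_of_injective _ hi, Finset.card_univ, Fintype.card_fin]
  have hjcard : (Finset.univ.image j).card = k := by
    rw [Finset.card_image_of_injective _ hj, Finset.card_univ, Fintype.card_fin]
  set I : Fin k → Fin n := ⇑((Finset.univ.image i).orderEmbOfFin hicard) with hIdef
  set J : Fin k → Fin n := ⇑((Finset.univ.image j).orderEmbOfFin hjcard) with hJdef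
  have hI : StrictMono I := ((Finset.univ.image i).orderEmbOfFin hicard).strictMono
  have hJ : StrictMono J := ((Finset.univ.image j).orderEmbOfFin hjcard).strictMono
  have hie : ∀ t, ∃ a, I a = i t := by
    intro t
    have h1 : i t ∈ (Finset.univ.image i) := Finset.mem_image_of_mem i (Finset.mem_univ t)
    have h2 := Finset.range_orderEmbOfFin (Finset.univ.image i) hicard
    have : i t ∈ Set.range I := by rw [hIdef, h2]; exact_mod_cast h1
    exact this
  have hje : ∀ t, ∃ a, J a = j t := by
    intro t
    have h1 : j t ∈ (Finset.univ.image j) := Finset.mem_image_of_mem j (Finset.mem_univ t)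
    have h2 := Finset.range_orderEmbOfFin (Finset.univ.image j) hjcard
    have : j t ∈ Set.range J := by rw [hJdef, h2]; exact_mod_cast h1
    exact this
  -- the permutations relating (i, j) to (I, J)
  have e0inj : Function.Injective (fun t => (hie t).choose) := by
    intro t t' h
    apply hi
    rw [← (hie t).choose_spec, ← (hie t').choose_spec]
    simp only at h
    rw [h]
  have f0inj : Function.Injective (fun t => (hje t).choose) := by
    intro t t' h
    apply hj
    rw [← (hje t).choose_spec, ← (hje t').choose_spec]
    simp only at h
    rw [h]
  set eE : Equiv.Perm (Fin k) :=
    Equiv.ofBijective _ (Finite.injective_iff_bijective.mp e0inj) with heE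
  set fE : Equiv.Perm (Fin k) :=
    Equiv.ofBijective _ (Finite.injective_iff_bijective.mp f0inj) with hfE
  have hIe : ∀ t, I (eE t) = i t := fun t => (hie t).choose_spec
  have hJf : ∀ t, J (fE t) = j t := fun t => (hje t).choose_spec
  set σ₀ : Equiv.Perm (Fin k) := eE.symm.trans fE with hσ₀
  have hIs : ∀ s, i (eE.symm s) = I s := by
    intro s
    rw [← hIe (eE.symm s), Equiv.apply_symm_apply]
  have hJs : ∀ s, j (eE.symm s) = J (σ₀ s) := by
    intro s
    rw [← hJf (eE.symm s)]
    rfl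
  -- abbreviations
  set S01 : Finset F := {0, 1} with hS01
  set P : Finset (Fin k → F) := Fintype.piFinset (fun _ : Fin k => S01) with hP
  -- Step 1: permanent expansion
  have step1 : ∀ μ : Fin k → F,
      per ((∑ t, μ t • A t).submatrix I J)
        = ∑ σ : Equiv.Perm (Fin k), ∑ τ : Fin k → Fin k,
            (∏ s, μ (τ s)) * ∏ s, A (τ s) (I s) (J (σ s)) := by
    intro μ
    show (∑ σ : Equiv.Perm (Fin k), ∏ s, ((∑ t, μ t • A t).submatrix I J) s (σ s)) = _
    apply Finset.sum_congr rfl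
    intro σ _
    have h1 : ∀ s : Fin k, ((∑ t, μ t • A t).submatrix I J) s (σ s)
        = ∑ t, μ t * A t (I s) (J (σ s)) := by
      intro s
      simp [Matrix.submatrix_apply, Matrix.sum_apply, Matrix.smul_apply, smul_eq_mul]
    rw [Finset.prod_congr rfl (fun s _ => h1 s),
      Finset.prod_univ_sum (fun _ => (Finset.univ : Finset (Fin k)))
        (fun s t => μ t * A t (I s) (J (σ s))), Fintype.piFinset_univ]
    exact Finset.sum_congr rfl fun τ _ => Finset.prod_mul_distrib
  -- Step 2: rearrange the big sum
  have step2 : (∑ μ ∈ P, (∏ t, epsF (μ t)) * per ((∑ t, μ t • A t).submatrix I J))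
      = ∑ σ : Equiv.Perm (Fin k), ∑ τ : Fin k → Fin k,
          (∑ μ ∈ P, (∏ t, epsF (μ t)) * ∏ s, μ (τ s)) * ∏ s, A (τ s) (I s) (J (σ s)) := by
    calc (∑ μ ∈ P, (∏ t, epsF (μ t)) * per ((∑ t, μ t • A t).submatrix I J))
        = ∑ μ ∈ P, ∑ σ : Equiv.Perm (Fin k), ∑ τ : Fin k → Fin k,
            (∏ t, epsF (μ t)) * ((∏ s, μ (τ s)) * ∏ s, A (τ s) (I s) (J (σ s))) := by
          apply Finset.sum_congr rfl; intro μ _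
          rw [step1 μ, Finset.mul_sum]
          exact Finset.sum_congr rfl fun σ _ => Finset.mul_sum _ _ _
      _ = ∑ σ : Equiv.Perm (Fin k), ∑ μ ∈ P, ∑ τ : Fin k → Fin k,
            (∏ t, epsF (μ t)) * ((∏ s, μ (τ s)) * ∏ s, A (τ s) (I s) (J (σ s))) :=
          Finset.sum_comm
      _ = ∑ σ : Equiv.Perm (Fin k), ∑ τ : Fin k → Fin k, ∑ μ ∈ P,
            (∏ t, epsF (μ t)) * ((∏ s, μ (τ s)) * ∏ s, A (τ s) (I s) (J (σ s))) :=
          Finset.sum_congr rfl fun σ _ => Finset.sum_comm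
      _ = _ := by
          apply Finset.sum_congr rfl; intro σ _
          apply Finset.sum_congr rfl; intro τ _
          rw [Finset.sum_mul]
          apply Finset.sum_congr rfl; intro μ _
          ring
  -- Step 3: the inner μ-sum is the indicator of bijectivity
  have hW : ∀ τ : Fin k → Fin k,
      (∑ μ ∈ P, (∏ t, epsF (μ t)) * ∏ s, μ (τ s))
        = if Function.Bijective τ then 1 else 0 := by
    intro τ
    have hfib : ∀ μ : Fin k → F,
        (∏ s, μ (τ s)) = ∏ t, μ t ^ (Finset.univ.filter fun s => τ s = t).card := by
      intro μ
      rw [← Finset.prod_fiberwise Finset.univ τ (fun s => μ (τ s))]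
      apply Finset.prod_congr rfl; intro t _
      rw [Finset.prod_congr rfl (fun s hs => by rw [(Finset.mem_filter.mp hs).2]),
        Finset.prod_const]
    have h1 : ∀ μ ∈ P, (∏ t, epsF (μ t)) * ∏ s, μ (τ s)
        = ∏ t, (epsF (μ t) * μ t ^ (Finset.univ.filter fun s => τ s = t).card) := by
      intro μ _
      rw [hfib μ, ← Finset.prod_mul_distrib]
    rw [Finset.sum_congr rfl h1, hP, ← Finset.prod_univ_sum
      (fun _ => S01) (fun t v => epsF v * v ^ (Finset.univ.filter fun s => τ s = t).card)]
    have h2 : ∀ t : Fin k, (∑ v ∈ S01, epsF v * v ^ (Finset.univ.filter fun s => τ s = t).card)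
        = if (Finset.univ.filter fun s => τ s = t).card = 0 then 0 else 1 := by
      intro t; rw [hS01]; exact sum_eps_pow _
    rw [Finset.prod_congr rfl (fun t _ => h2 t)]
    by_cases hb : Function.Bijective τ
    · rw [if_pos hb]
      apply Finset.prod_eq_one
      intro t _
      rw [if_neg]
      obtain ⟨s, hs⟩ := hb.surjective t
      exact Finset.card_ne_zero_of_mem (Finset.mem_filter.mpr ⟨Finset.mem_univ s, hs⟩)
    · rw [if_neg hb]
      have hsurj : ¬ Function.Surjective τ := fun h => hb (Finite.surjective_iff_bijective.mp h)
      rw [Function.Surjective] at hsurj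
      push_neg at hsurj
      obtain ⟨t, ht⟩ := hsurj
      apply Finset.prod_eq_zero (Finset.mem_univ t)
      rw [if_pos]
      rw [Finset.card_eq_zero, Finset.filter_eq_empty_iff]
      exact fun s _ => ht s
  -- Step 4: for bijective τ, a nonzero product forces τ = eE.symm and σ = σ₀
  have hforce : ∀ (σ : Equiv.Perm (Fin k)) (τ : Fin k → Fin k), Function.Bijective τ →
      (∏ s, A (τ s) (I s) (J (σ s))) ≠ 0 → (τ = ⇑eE.symm ∧ σ = σ₀) := by
    intro σ τ hbij hT
    have hfacne : ∀ s : Fin k, A (τ s) (I s) (J (σ s)) ≠ 0 := fun s =>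
      Finset.prod_ne_zero_iff.mp hT s (Finset.mem_univ s)
    have hnl : ∀ s, ¬ LexLt (I s, J (σ s)) (i (τ s), j (τ s)) := fun s hlt =>
      hfacne s (hq (τ s) _ hlt)
    have h1 : ∀ s, eE (τ s) ≤ s := by
      intro s
      have hnot : ¬ (I s < i (τ s)) := fun hlt => hnl s (Or.inl hlt)
      rw [← hIe (τ s)] at hnot
      exact hI.le_iff_le.mp (not_lt.mp hnot)
    have hτeq : ∀ s, τ s = eE.symm s := by
      intro s
      have heq : eE (τ s) = s :=
        aux_bij_le_eq (eE.bijective.comp hbij) Function.bijective_id h1 s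
      exact (Equiv.eq_symm_apply eE).mpr heq
    have h2 : ∀ s, σ₀ s ≤ σ s := by
      intro s
      have hIeq : I s = i (τ s) := by rw [hτeq s, hIs s]
      have hnot : ¬ (J (σ s) < j (τ s)) := fun hlt => hnl s (Or.inr ⟨hIeq, hlt⟩)
      have hle := not_lt.mp hnot
      rw [hτeq s, hJs s] at hle
      exact hJ.le_iff_le.mp hle
    have hσ : σ = σ₀ :=
      Equiv.ext fun s => (aux_bij_le_eq σ₀.bijective σ.bijective h2 s).symm
    exact ⟨funext hτeq, hσ⟩
  -- Step 5: key identity — the alternating sum equals 1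
  have key : (∑ μ ∈ P, (∏ t, epsF (μ t)) * per ((∑ t, μ t • A t).submatrix I J)) = 1 := by
    rw [step2]
    rw [Finset.sum_congr rfl (fun σ _ => Finset.sum_congr rfl
      (fun τ _ => by rw [hW τ]))]
    have hval : (if Function.Bijective (⇑eE.symm : Fin k → Fin k) then (1:F) else 0)
        * ∏ s, A (eE.symm s) (I s) (J (σ₀ s)) = 1 := by
      rw [if_pos eE.symm.bijective, one_mul]
      apply Finset.prod_eq_one
      intro s _
      rw [← hIs s, ← hJs s]
      exact hone (eE.symm s)
    rw [Finset.sum_eq_single_of_mem σ₀ (Finset.mem_univ σ₀) ?_]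
    · rw [Finset.sum_eq_single_of_mem (⇑eE.symm : Fin k → Fin k) (Finset.mem_univ _) ?_]
      · exact hval
      · intro τ _ hne
        by_cases hb : Function.Bijective τ
        · rcases eq_or_ne (∏ s, A (τ s) (I s) (J (σ₀ s))) 0 with h | h
          · rw [h, mul_zero]
          · exact absurd (hforce σ₀ τ hb h).1 hne
        · rw [if_neg hb, zero_mul]
    · intro σ _ hne
      apply Finset.sum_eq_zero
      intro τ _
      by_cases hb : Function.Bijective τ
      · rcases eq_or_ne (∏ s, A (τ s) (I s) (J (σ s))) 0 with h | h
        · rw [h, mul_zero]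
        · exact absurd (hforce σ τ hb h).2 hne
      · rw [if_neg hb, zero_mul]
  -- conclusion
  have hne : (∑ μ ∈ P, (∏ t, epsF (μ t)) * per ((∑ t, μ t • A t).submatrix I J)) ≠ 0 := by
    rw [key]; exact one_ne_zero
  obtain ⟨μ, hμP, hμ⟩ := Finset.exists_ne_zero_of_sum_ne_zero hne
  refine ⟨μ, ?_, I, J, hI, hJ, right_ne_zero_of_mul hμ⟩
  intro t
  have := (Fintype.mem_piFinset.mp hμP) t
  rw [hS01] at this
  rcases Finset.mem_insert.mp this with h | h
  · exact Or.inl h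
  · exact Or.inr (Finset.mem_singleton.mp h)
end
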